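/- arXiv:1610.08068 — 3 statements merged into one kernel-verified Lean document; each statement's English description precedes it below -/
import Mathlib

section
/- Let C be a category and M a class of morphisms in C. Then the class of retracts (in the arrow category of Ind(C)) of morphisms in Lw≅(M) equals Lw≅(M); i.e., Lw≅(M) is closed under retracts. -/
open CategoryTheory Limits

universe v u

namespace Paper

variable {C : Type v} [SmallCategory C]

/-- The ind-object associated to a small filtered diagram `X : I ⥤ C`, namely the colimit in
`Ind C` of the composition of `X` with the Yoneda embedding `C ⥤ Ind C`. -/
noncomputable def indOf {I : Type v} [SmallCategory I] [IsFiltered I] (X : I ⥤ C) : Ind C :=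
  colimit (X ⋙ Ind.yoneda)

/-- The morphism of ind-objects induced by a natural transformation of diagrams. -/
noncomputable def indMap {I : Type v} [SmallCategory I] [IsFiltered I] {X Y : I ⥤ C}
    (φ : X ⟶ Y) : indOf X ⟶ indOf Y :=
  colim.map (Functor.whiskerRight φ Ind.yoneda)

/-- `Lw M` is the class of morphisms of `Ind C` that are isomorphic, in the arrow category of
`Ind C`, to a morphism induced by a natural transformation of small filtered diagrams which is
levelwise in `M` (the essentially levelwise `M`-maps). -/
def Lw (M : MorphismProperty C) : MorphismProperty (Ind C) := fun _ _ f =>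
  ∃ (I : Type v) (_ : SmallCategory I) (_ : IsFiltered I) (X Y : I ⥤ C) (φ : X ⟶ Y),
    (∀ i : I, M (φ.app i)) ∧ Nonempty (Arrow.mk f ≅ Arrow.mk (indMap φ))


/-- `f` is a retract of `g` in the arrow category. -/
def IsRetractOf {M : Type u} [Category.{v} M] {A B X Y : M} (f : A ⟶ B) (g : X ⟶ Y) : Prop :=
  ∃ (i : A ⟶ X) (r : X ⟶ A) (i' : B ⟶ Y) (r' : Y ⟶ B),
    i ≫ r = 𝟙 A ∧ i' ≫ r' = 𝟙 B ∧ i ≫ g = f ≫ i' ∧ r ≫ f = g ≫ r'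

/-- The closure of a class of morphisms under retracts. -/
def retracts {M : Type u} [Category.{v} M] (P : MorphismProperty M) : MorphismProperty M :=
  fun _ _ f => ∃ (X Y : M) (g : X ⟶ Y), P g ∧ IsRetractOf f g

attribute [reducible] indOf

open Opposite

set_option linter.unusedSectionVars false
set_option linter.unusedVariables false

section Bridge

variable {I : Type v} [SmallCategory I] [IsFiltered I] (F : I ⥤ C) {A : C}

/-- Transfer a morphism `yo A ⟶ colim (F ⋙ yo)` in `Ind C` to the presheaf level. -/
noncomputable def toPsh (t : Ind.yoneda.obj A ⟶ colimit (F ⋙ Ind.yoneda)) :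
    yoneda.obj A ⟶ colimit (F ⋙ yoneda) :=
  Ind.yonedaCompInclusion.inv.app A ≫ (Ind.inclusion C).map t ≫
    (preservesColimitIso (Ind.inclusion C) (F ⋙ Ind.yoneda)).hom ≫
    (HasColimit.isoOfNatIso (Functor.isoWhiskerLeft F Ind.yonedaCompInclusion)).hom

lemma toPsh_injective : Function.Injective (toPsh F (A := A)) := by
  intro t t' h
  unfold toPsh at h
  rw [cancel_epi] at h
  simp only [← Category.assoc] at h
  rw [cancel_mono, cancel_mono] at h
  exact (Ind.inclusion C).map_injective h

lemma toPsh_comp (i : I) (u : A ⟶ F.obj i) :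
    toPsh F (Ind.yoneda.map u ≫ colimit.ι (F ⋙ Ind.yoneda) i)
      = yoneda.map u ≫ colimit.ι (F ⋙ yoneda) i := by
  unfold toPsh
  rw [Functor.map_comp]
  slice_lhs 3 4 => rw [ι_preservesColimitIso_hom (Ind.inclusion C) (F ⋙ Ind.yoneda) i]
  slice_lhs 3 4 => rw [HasColimit.isoOfNatIso_ι_hom]
  slice_lhs 1 2 => rw [show (Ind.inclusion C).map (Ind.yoneda.map u)
      = (Ind.yoneda ⋙ Ind.inclusion C).map u from rfl]
  have : (Functor.isoWhiskerLeft F Ind.yonedaCompInclusion).hom.app i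
      = Ind.yonedaCompInclusion.hom.app (F.obj i) := rfl
  rw [this]
  slice_lhs 1 2 => rw [← Ind.yonedaCompInclusion.inv.naturality u]
  slice_lhs 2 3 => rw [Iso.inv_hom_id_app]
  simp

lemma psh_exists_rep (s : yoneda.obj A ⟶ colimit (F ⋙ yoneda)) :
    ∃ (i : I) (u : A ⟶ F.obj i), yoneda.map u ≫ colimit.ι (F ⋙ yoneda) i = s := by
  let H : (Cᵒᵖ ⥤ Type v) ⥤ Type v := coyoneda.obj (op (yoneda.obj A))
  let G : I ⥤ Cᵒᵖ ⥤ Type v := F ⋙ yoneda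
  obtain ⟨i, x, hx⟩ := Types.jointly_surjective (G ⋙ H) (colimit.isColimit (G ⋙ H))
    ((preservesColimitIso H G).hom s)
  have e1 := ConcreteCategory.congr_hom (ι_preservesColimitIso_inv H G i) x
  have e2 : (preservesColimitIso H G).inv ((preservesColimitIso H G).hom s) = s :=
    ConcreteCategory.congr_hom ((preservesColimitIso H G).hom_inv_id) s
  rw [← hx] at e2
  obtain ⟨u, rfl⟩ := yoneda.map_surjective x
  refine ⟨i, u, ?_⟩
  rw [← e2]
  have e1' : (preservesColimitIso H G).inv (colimit.ι (G ⋙ H) i (yoneda.map u))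
      = yoneda.map u ≫ colimit.ι G i := by
    exact (ConcreteCategory.congr_hom (ι_preservesColimitIso_inv H G i) (yoneda.map u))
  exact e1'.symm

lemma psh_exists_eq {i : I} {u u' : A ⟶ F.obj i}
    (h : yoneda.map u ≫ colimit.ι (F ⋙ yoneda) i = yoneda.map u' ≫ colimit.ι (F ⋙ yoneda) i) :
    ∃ (j : I) (c : i ⟶ j), u ≫ F.map c = u' ≫ F.map c := by
  let H : (Cᵒᵖ ⥤ Type v) ⥤ Type v := coyoneda.obj (op (yoneda.obj A))
  let G : I ⥤ Cᵒᵖ ⥤ Type v := F ⋙ yoneda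
  have h2 : colimit.ι (G ⋙ H) i (yoneda.map u) = colimit.ι (G ⋙ H) i (yoneda.map u') := by
    apply (preservesColimitIso H G).symm.toEquiv.injective
    have e1 : (preservesColimitIso H G).inv (colimit.ι (G ⋙ H) i (yoneda.map u))
        = yoneda.map u ≫ colimit.ι G i := by
      exact (ConcreteCategory.congr_hom (ι_preservesColimitIso_inv H G i) (yoneda.map u))
    have e2 : (preservesColimitIso H G).inv (colimit.ι (G ⋙ H) i (yoneda.map u'))
        = yoneda.map u' ≫ colimit.ι G i := by
      exact (ConcreteCategory.congr_hom (ι_preservesColimitIso_inv H G i) (yoneda.map u'))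
    show (preservesColimitIso H G).inv _ = (preservesColimitIso H G).inv _
    rw [e1, e2]
    exact h
  obtain ⟨k, f, g, hk⟩ := (Types.FilteredColimit.colimit_eq_iff (G ⋙ H)).mp h2
  refine ⟨IsFiltered.coeq f g, f ≫ IsFiltered.coeqHom f g, ?_⟩
  apply yoneda.map_injective
  have hk' : yoneda.map u ≫ G.map f = yoneda.map u' ≫ G.map g := hk
  have : yoneda.map u ≫ G.map (f ≫ IsFiltered.coeqHom f g)
      = yoneda.map u' ≫ G.map (g ≫ IsFiltered.coeqHom f g) := by
    rw [G.map_comp, G.map_comp, ← Category.assoc, ← Category.assoc, hk']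
  rw [IsFiltered.coeq_condition f g] at this ⊢
  simpa [G] using this

lemma ind_exists_rep (t : Ind.yoneda.obj A ⟶ colimit (F ⋙ Ind.yoneda)) :
    ∃ (i : I) (u : A ⟶ F.obj i), Ind.yoneda.map u ≫ colimit.ι (F ⋙ Ind.yoneda) i = t := by
  obtain ⟨i, u, h⟩ := psh_exists_rep F (toPsh F t)
  exact ⟨i, u, toPsh_injective F (by rw [toPsh_comp, h])⟩

lemma ind_exists_eq {i : I} {u u' : A ⟶ F.obj i}
    (h : Ind.yoneda.map u ≫ colimit.ι (F ⋙ Ind.yoneda) i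
      = Ind.yoneda.map u' ≫ colimit.ι (F ⋙ Ind.yoneda) i) :
    ∃ (j : I) (c : i ⟶ j), u ≫ F.map c = u' ≫ F.map c := by
  apply psh_exists_eq F
  rw [← toPsh_comp, ← toPsh_comp, h]

end Bridge

section Main

variable {I : Type v} [SmallCategory I] [IsFiltered I] {X Y : I ⥤ C} (φ : X ⟶ Y)

/-- Iterate of an endomorphism. -/
noncomputable def pw {Z : Ind C} (e : Z ⟶ Z) (d : ℕ) : Z ⟶ Z :=
  Nat.rec (𝟙 Z) (fun _ p => p ≫ e) d

@[simp] lemma pw_zero {Z : Ind C} (e : Z ⟶ Z) : pw e 0 = 𝟙 Z := rfl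

@[simp] lemma pw_succ {Z : Ind C} (e : Z ⟶ Z) (d : ℕ) : pw e (d + 1) = pw e d ≫ e := rfl

lemma pw_add {Z : Ind C} (e : Z ⟶ Z) (a b : ℕ) : pw e (a + b) = pw e a ≫ pw e b := by
  induction b with
  | zero => simp
  | succ b ih => rw [← Nat.add_assoc, pw_succ, pw_succ, ih, Category.assoc]

lemma pw_absorb {Z W : Ind C} {e : Z ⟶ Z} {r : Z ⟶ W} (h : e ≫ r = r) (d : ℕ) :
    pw e d ≫ r = r := by
  induction d with
  | zero => simp
  | succ d ih => rw [pw_succ, Category.assoc, h, ih]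

lemma pw_one {Z : Ind C} (e : Z ⟶ Z) : pw e 1 = e := by
  rw [show (1 : ℕ) = 0 + 1 from rfl, pw_succ, pw_zero, Category.id_comp]

lemma pw_idem {Z : Ind C} {e : Z ⟶ Z} (he : e ≫ e = e) (d : ℕ) (hd : 1 ≤ d) :
    pw e d = e := by
  induction d with
  | zero => omega
  | succ d ih =>
      rcases Nat.eq_or_lt_of_le hd with h | h
      · rw [← h, pw_one]
      · rw [pw_succ, ih (by omega), he]

lemma ι_indMap (i : I) :
    colimit.ι (X ⋙ Ind.yoneda) i ≫ indMap φ
      = Ind.yoneda.map (φ.app i) ≫ colimit.ι (Y ⋙ Ind.yoneda) i := by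
  simp [indMap]

variable (e₁ : indOf X ⟶ indOf X) (e₂ : indOf Y ⟶ indOf Y)

lemma pw_comm (hcomm : e₁ ≫ indMap φ = indMap φ ≫ e₂) (d : ℕ) :
    pw e₁ d ≫ indMap φ = indMap φ ≫ pw e₂ d := by
  induction d with
  | zero => simp
  | succ d ih => rw [pw_succ, pw_succ, Category.assoc, hcomm, ← Category.assoc, ih, Category.assoc]

lemma push_rep {F : I ⥤ C} {A : C} {j k : I} (u : A ⟶ F.obj j) (c : j ⟶ k) :
    Ind.yoneda.map (u ≫ F.map c) ≫ colimit.ι (F ⋙ Ind.yoneda) k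
      = Ind.yoneda.map u ≫ colimit.ι (F ⋙ Ind.yoneda) j := by
  rw [Functor.map_comp, Category.assoc,
    show Ind.yoneda.map (F.map c) ≫ colimit.ι (F ⋙ Ind.yoneda) k
      = colimit.ι (F ⋙ Ind.yoneda) j from colimit.w (F ⋙ Ind.yoneda) c]

lemma exists_pw_rep (hcomm : e₁ ≫ indMap φ = indMap φ ≫ e₂) (d : ℕ) (i : I) :
    ∃ (j : I) (u : X.obj i ⟶ X.obj j) (v : Y.obj i ⟶ Y.obj j),
      Ind.yoneda.map u ≫ colimit.ι (X ⋙ Ind.yoneda) j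
        = colimit.ι (X ⋙ Ind.yoneda) i ≫ pw e₁ d
      ∧ Ind.yoneda.map v ≫ colimit.ι (Y ⋙ Ind.yoneda) j
        = colimit.ι (Y ⋙ Ind.yoneda) i ≫ pw e₂ d
      ∧ u ≫ φ.app j = φ.app i ≫ v := by
  obtain ⟨j₁, u₁, hu₁⟩ := ind_exists_rep X (colimit.ι (X ⋙ Ind.yoneda) i ≫ pw e₁ d)
  obtain ⟨j₂, v₁, hv₁⟩ := ind_exists_rep Y (colimit.ι (Y ⋙ Ind.yoneda) i ≫ pw e₂ d)
  let j₀ := IsFiltered.max j₁ j₂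
  let u₂ := u₁ ≫ X.map (IsFiltered.leftToMax j₁ j₂)
  let v₂ := v₁ ≫ Y.map (IsFiltered.rightToMax j₁ j₂)
  have hu₂ : Ind.yoneda.map u₂ ≫ colimit.ι (X ⋙ Ind.yoneda) j₀
      = colimit.ι (X ⋙ Ind.yoneda) i ≫ pw e₁ d := by rw [push_rep, hu₁]
  have hv₂ : Ind.yoneda.map v₂ ≫ colimit.ι (Y ⋙ Ind.yoneda) j₀
      = colimit.ι (Y ⋙ Ind.yoneda) i ≫ pw e₂ d := by rw [push_rep, hv₁]
  clear_value u₂ v₂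
  have hsq₀ : Ind.yoneda.map (u₂ ≫ φ.app j₀) ≫ colimit.ι (Y ⋙ Ind.yoneda) j₀
      = Ind.yoneda.map (φ.app i ≫ v₂) ≫ colimit.ι (Y ⋙ Ind.yoneda) j₀ := by
    rw [Functor.map_comp, Functor.map_comp, Category.assoc, Category.assoc,
      ← ι_indMap φ j₀, ← Category.assoc, hu₂, Category.assoc, pw_comm φ e₁ e₂ hcomm d,
      ← Category.assoc, ι_indMap φ i, Category.assoc, ← hv₂]
  obtain ⟨k, c, hc⟩ := ind_exists_eq Y hsq₀
  refine ⟨k, u₂ ≫ X.map c, v₂ ≫ Y.map c, ?_, ?_, ?_⟩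
  · rw [push_rep, hu₂]
  · rw [push_rep, hv₂]
  · rw [Category.assoc, φ.naturality c, ← Category.assoc, hc, Category.assoc]

/-- Objects of the reindexing category: a natural number (the "stage") and an index. -/
structure JObj (φ : X ⟶ Y) (e₁ : indOf X ⟶ indOf X) (e₂ : indOf Y ⟶ indOf Y) : Type v where
  n : ℕ
  i : I

/-- Morphisms of the reindexing category. -/
@[ext]
structure JHom (ρ ρ' : JObj φ e₁ e₂) : Type v where
  w : X.obj ρ.i ⟶ X.obj ρ'.i
  w' : Y.obj ρ.i ⟶ Y.obj ρ'.i
  le : ρ.n ≤ ρ'.n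
  hw : Ind.yoneda.map w ≫ colimit.ι (X ⋙ Ind.yoneda) ρ'.i
      = colimit.ι (X ⋙ Ind.yoneda) ρ.i ≫ pw e₁ (ρ'.n - ρ.n)
  hw' : Ind.yoneda.map w' ≫ colimit.ι (Y ⋙ Ind.yoneda) ρ'.i
      = colimit.ι (Y ⋙ Ind.yoneda) ρ.i ≫ pw e₂ (ρ'.n - ρ.n)
  hsq : w ≫ φ.app ρ'.i = φ.app ρ.i ≫ w'

/-- Identity morphism. -/
noncomputable def JHom.idJ (ρ : JObj φ e₁ e₂) : JHom φ e₁ e₂ ρ ρ where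
  w := 𝟙 _
  w' := 𝟙 _
  le := le_refl _
  hw := by simp
  hw' := by simp
  hsq := by simp

/-- Composition. -/
noncomputable def JHom.compJ {ρ₁ ρ₂ ρ₃ : JObj φ e₁ e₂} (a : JHom φ e₁ e₂ ρ₁ ρ₂)
    (b : JHom φ e₁ e₂ ρ₂ ρ₃) : JHom φ e₁ e₂ ρ₁ ρ₃ where
  w := a.w ≫ b.w
  w' := a.w' ≫ b.w'
  le := a.le.trans b.le
  hw := by
    rw [Functor.map_comp, Category.assoc, b.hw, ← Category.assoc, a.hw, Category.assoc,
      ← pw_add]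
    have h : ρ₂.n - ρ₁.n + (ρ₃.n - ρ₂.n) = ρ₃.n - ρ₁.n := by
      have := a.le; have := b.le; omega
    rw [h]
  hw' := by
    rw [Functor.map_comp, Category.assoc, b.hw', ← Category.assoc, a.hw', Category.assoc,
      ← pw_add]
    have h : ρ₂.n - ρ₁.n + (ρ₃.n - ρ₂.n) = ρ₃.n - ρ₁.n := by
      have := a.le; have := b.le; omega
    rw [h]
  hsq := by rw [Category.assoc, b.hsq, ← Category.assoc, a.hsq, Category.assoc]

noncomputable instance : SmallCategory (JObj φ e₁ e₂) where
  Hom := JHom φ e₁ e₂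
  id ρ := JHom.idJ φ e₁ e₂ ρ
  comp a b := JHom.compJ φ e₁ e₂ a b
  id_comp a := by apply JHom.ext <;> simp [JHom.idJ, JHom.compJ]
  comp_id a := by apply JHom.ext <;> simp [JHom.idJ, JHom.compJ]
  assoc a b c := by apply JHom.ext <;> simp [JHom.compJ]

/-- The reindexed `X`-diagram. -/
noncomputable def JX : JObj φ e₁ e₂ ⥤ C where
  obj ρ := X.obj ρ.i
  map := fun {ρ ρ'} (m : JHom φ e₁ e₂ ρ ρ') => m.w
  map_id _ := rfl
  map_comp _ _ := rfl

/-- The reindexed `Y`-diagram. -/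
noncomputable def JY : JObj φ e₁ e₂ ⥤ C where
  obj ρ := Y.obj ρ.i
  map := fun {ρ ρ'} (m : JHom φ e₁ e₂ ρ ρ') => m.w'
  map_id _ := rfl
  map_comp _ _ := rfl

/-- The reindexed natural transformation. -/
noncomputable def Jφ : JX φ e₁ e₂ ⟶ JY φ e₁ e₂ where
  app ρ := φ.app ρ.i
  naturality := fun _ _ (m : JHom φ e₁ e₂ _ _) => m.hsq

attribute [reducible] JX JY Jφ

lemma J_filtered (hcomm : e₁ ≫ indMap φ = indMap φ ≫ e₂) :
    IsFiltered (JObj φ e₁ e₂) := by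
  have hne : Nonempty (JObj φ e₁ e₂) := ⟨⟨0, IsFiltered.nonempty.some⟩⟩
  refine { nonempty := hne, cocone_objs := ?_, cocone_maps := ?_ }
  · intro ρ ρ'
    obtain ⟨j₁, u₁, v₁, hu₁, hv₁, hs₁⟩ :=
      exists_pw_rep φ e₁ e₂ hcomm (max ρ.n ρ'.n - ρ.n) ρ.i
    obtain ⟨j₂, u₂, v₂, hu₂, hv₂, hs₂⟩ :=
      exists_pw_rep φ e₁ e₂ hcomm (max ρ.n ρ'.n - ρ'.n) ρ'.i
    have m₁ : JHom φ e₁ e₂ ρ ⟨max ρ.n ρ'.n, IsFiltered.max j₁ j₂⟩ :=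
      ⟨u₁ ≫ X.map (IsFiltered.leftToMax j₁ j₂), v₁ ≫ Y.map (IsFiltered.leftToMax j₁ j₂),
        Nat.le_max_left _ _, by rw [push_rep, hu₁], by rw [push_rep, hv₁], by
          rw [Category.assoc, φ.naturality, ← Category.assoc, hs₁, Category.assoc]⟩
    have m₂ : JHom φ e₁ e₂ ρ' ⟨max ρ.n ρ'.n, IsFiltered.max j₁ j₂⟩ :=
      ⟨u₂ ≫ X.map (IsFiltered.rightToMax j₁ j₂), v₂ ≫ Y.map (IsFiltered.rightToMax j₁ j₂),
        Nat.le_max_right _ _, by rw [push_rep, hu₂], by rw [push_rep, hv₂], by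
          rw [Category.assoc, φ.naturality, ← Category.assoc, hs₂, Category.assoc]⟩
    exact ⟨⟨max ρ.n ρ'.n, IsFiltered.max j₁ j₂⟩, m₁, m₂, trivial⟩
  · intro ρ ρ' f g
    let f' : JHom φ e₁ e₂ ρ ρ' := f
    let g' : JHom φ e₁ e₂ ρ ρ' := g
    have hX : Ind.yoneda.map f'.w ≫ colimit.ι (X ⋙ Ind.yoneda) ρ'.i
        = Ind.yoneda.map g'.w ≫ colimit.ι (X ⋙ Ind.yoneda) ρ'.i := by rw [f'.hw, g'.hw]
    have hY : Ind.yoneda.map f'.w' ≫ colimit.ι (Y ⋙ Ind.yoneda) ρ'.i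
        = Ind.yoneda.map g'.w' ≫ colimit.ι (Y ⋙ Ind.yoneda) ρ'.i := by rw [f'.hw', g'.hw']
    obtain ⟨k₁, c₁, hc₁⟩ := ind_exists_eq X hX
    obtain ⟨k₂, c₂, hc₂⟩ := ind_exists_eq Y hY
    let q := IsFiltered.coeqHom (c₁ ≫ IsFiltered.leftToMax k₁ k₂)
        (c₂ ≫ IsFiltered.rightToMax k₁ k₂)
    let c : ρ'.i ⟶ IsFiltered.coeq (c₁ ≫ IsFiltered.leftToMax k₁ k₂)
        (c₂ ≫ IsFiltered.rightToMax k₁ k₂) := c₁ ≫ IsFiltered.leftToMax k₁ k₂ ≫ q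
    have hc' : c = c₂ ≫ IsFiltered.rightToMax k₁ k₂ ≫ q := by
      show c₁ ≫ _ ≫ _ = _
      rw [← Category.assoc, ← Category.assoc, IsFiltered.coeq_condition]
    have hcX : f'.w ≫ X.map c = g'.w ≫ X.map c := by
      show f'.w ≫ X.map (c₁ ≫ _) = g'.w ≫ X.map (c₁ ≫ _)
      rw [X.map_comp, ← Category.assoc, hc₁, Category.assoc]
    have hcY : f'.w' ≫ Y.map c = g'.w' ≫ Y.map c := by
      rw [hc', Y.map_comp, ← Category.assoc, hc₂, Category.assoc]
    let m : JHom φ e₁ e₂ ρ' ⟨ρ'.n, _⟩ :=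
      ⟨X.map c, Y.map c, le_refl _, by
          rw [show ρ'.n - ρ'.n = 0 from by omega, pw_zero, Category.comp_id]
          exact colimit.w (X ⋙ Ind.yoneda) c, by
          rw [show ρ'.n - ρ'.n = 0 from by omega, pw_zero, Category.comp_id]
          exact colimit.w (Y ⋙ Ind.yoneda) c,
        φ.naturality c⟩
    refine ⟨⟨ρ'.n, _⟩, m, ?_⟩
    apply JHom.ext
    · exact hcX
    · exact hcY

lemma isRetractOf_of_iso {D : Type u} [Category.{v} D] {A B P Q P' Q' : D} {f : A ⟶ B}
    {g : P ⟶ Q} {g' : P' ⟶ Q'} (h : IsRetractOf f g) (η : Arrow.mk g ≅ Arrow.mk g') :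
    IsRetractOf f g' := by
  obtain ⟨i, r, i', r', h1, h2, h3, h4⟩ := h
  have hL : η.hom.left ≫ η.inv.left = 𝟙 _ := by
    have := congrArg CommaMorphism.left η.hom_inv_id
    simpa using this
  have hR : η.hom.right ≫ η.inv.right = 𝟙 _ := by
    have := congrArg CommaMorphism.right η.hom_inv_id
    simpa using this
  refine ⟨i ≫ η.hom.left, η.inv.left ≫ r, i' ≫ η.hom.right, η.inv.right ≫ r', ?_, ?_, ?_, ?_⟩
  · rw [Category.assoc, ← Category.assoc (η.hom.left), hL, Category.id_comp, h1]
  · rw [Category.assoc, ← Category.assoc (η.hom.right), hR, Category.id_comp, h2]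
  · have hw : η.hom.left ≫ g' = g ≫ η.hom.right := Arrow.w η.hom
    rw [Category.assoc, hw, ← Category.assoc, h3, Category.assoc]
  · have hw : η.inv.left ≫ g = g' ≫ η.inv.right := Arrow.w η.inv
    rw [Category.assoc, h4, ← Category.assoc, hw, Category.assoc]

section Iso

variable [IsFiltered (JObj φ e₁ e₂)] {A B : Ind C}

/-- The `J`-morphism `⟨0,i⟩ ⟶ ⟨0,i'⟩` induced by `a : i ⟶ i'`. -/
noncomputable def mk0Hom {i i' : I} (a : i ⟶ i') :
    JHom φ e₁ e₂ ⟨0, i⟩ ⟨0, i'⟩ where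
  w := X.map a
  w' := Y.map a
  le := le_refl _
  hw := by
    have := colimit.w (X ⋙ Ind.yoneda) a
    simpa using this
  hw' := by
    have := colimit.w (Y ⋙ Ind.yoneda) a
    simpa using this
  hsq := φ.naturality a

attribute [reducible] mk0Hom

/-- The comparison morphism from the reindexed colimit to the retract. -/
noncomputable def alphaX (r : indOf X ⟶ A) (hr : e₁ ≫ r = r) :
    colimit (JX φ e₁ e₂ ⋙ Ind.yoneda) ⟶ A :=
  colimit.desc (JX φ e₁ e₂ ⋙ Ind.yoneda)
    { pt := A
      ι :=
        { app := fun ρ => colimit.ι (X ⋙ Ind.yoneda) ρ.i ≫ r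
          naturality := fun ρ ρ' (m : JHom φ e₁ e₂ ρ ρ') => by
            show Ind.yoneda.map m.w ≫ colimit.ι (X ⋙ Ind.yoneda) ρ'.i ≫ r = _
            rw [← Category.assoc, m.hw, Category.assoc, pw_absorb hr]
            simp } }

@[simp] lemma ι_alphaX (r : indOf X ⟶ A) (hr : e₁ ≫ r = r) (ρ : JObj φ e₁ e₂) :
    colimit.ι (JX φ e₁ e₂ ⋙ Ind.yoneda) ρ ≫ alphaX φ e₁ e₂ r hr
      = colimit.ι (X ⋙ Ind.yoneda) ρ.i ≫ r :=
  colimit.ι_desc _ _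

/-- The morphism from `indOf X` to the reindexed colimit. -/
noncomputable def wXmap : indOf X ⟶ colimit (JX φ e₁ e₂ ⋙ Ind.yoneda) :=
  colimit.desc (X ⋙ Ind.yoneda)
    { pt := _
      ι :=
        { app := fun i => colimit.ι (JX φ e₁ e₂ ⋙ Ind.yoneda) ⟨0, i⟩
          naturality := fun i i' a => by
            have := colimit.w (JX φ e₁ e₂ ⋙ Ind.yoneda) (mk0Hom φ e₁ e₂ a)
            simpa using this } }

@[simp] lemma ι_wXmap (i : I) :
    colimit.ι (X ⋙ Ind.yoneda) i ≫ wXmap φ e₁ e₂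
      = colimit.ι (JX φ e₁ e₂ ⋙ Ind.yoneda) ⟨0, i⟩ :=
  colimit.ι_desc _ _

/-- Analogue of `alphaX` for `Y`. -/
noncomputable def alphaY (r' : indOf Y ⟶ B) (hr' : e₂ ≫ r' = r') :
    colimit (JY φ e₁ e₂ ⋙ Ind.yoneda) ⟶ B :=
  colimit.desc (JY φ e₁ e₂ ⋙ Ind.yoneda)
    { pt := B
      ι :=
        { app := fun ρ => colimit.ι (Y ⋙ Ind.yoneda) ρ.i ≫ r'
          naturality := fun ρ ρ' (m : JHom φ e₁ e₂ ρ ρ') => by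
            show Ind.yoneda.map m.w' ≫ colimit.ι (Y ⋙ Ind.yoneda) ρ'.i ≫ r' = _
            rw [← Category.assoc, m.hw', Category.assoc, pw_absorb hr']
            simp } }

@[simp] lemma ι_alphaY (r' : indOf Y ⟶ B) (hr' : e₂ ≫ r' = r') (ρ : JObj φ e₁ e₂) :
    colimit.ι (JY φ e₁ e₂ ⋙ Ind.yoneda) ρ ≫ alphaY φ e₁ e₂ r' hr'
      = colimit.ι (Y ⋙ Ind.yoneda) ρ.i ≫ r' :=
  colimit.ι_desc _ _

/-- Analogue of `wXmap` for `Y`. -/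
noncomputable def wYmap : indOf Y ⟶ colimit (JY φ e₁ e₂ ⋙ Ind.yoneda) :=
  colimit.desc (Y ⋙ Ind.yoneda)
    { pt := _
      ι :=
        { app := fun i => colimit.ι (JY φ e₁ e₂ ⋙ Ind.yoneda) ⟨0, i⟩
          naturality := fun i i' a => by
            have := colimit.w (JY φ e₁ e₂ ⋙ Ind.yoneda) (mk0Hom φ e₁ e₂ a)
            simpa using this } }

@[simp] lemma ι_wYmap (i : I) :
    colimit.ι (Y ⋙ Ind.yoneda) i ≫ wYmap φ e₁ e₂
      = colimit.ι (JY φ e₁ e₂ ⋙ Ind.yoneda) ⟨0, i⟩ :=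
  colimit.ι_desc _ _

/-- The key lemma: composing the idempotent with `wXmap` is absorbed into the colimit. -/
lemma e_wXmap (hcomm : e₁ ≫ indMap φ = indMap φ ≫ e₂)
    (he₁ : e₁ ≫ e₁ = e₁) (he₂ : e₂ ≫ e₂ = e₂) (ρ : JObj φ e₁ e₂) :
    colimit.ι (X ⋙ Ind.yoneda) ρ.i ≫ e₁ ≫ wXmap φ e₁ e₂
      = colimit.ι (JX φ e₁ e₂ ⋙ Ind.yoneda) ρ ∧
    colimit.ι (Y ⋙ Ind.yoneda) ρ.i ≫ e₂ ≫ wYmap φ e₁ e₂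
      = colimit.ι (JY φ e₁ e₂ ⋙ Ind.yoneda) ρ := by
  obtain ⟨j, u, v, hu, hv, hs⟩ := exists_pw_rep φ e₁ e₂ hcomm 1 ρ.i
  rw [pw_one] at hu hv
  obtain ⟨j', p, q, hp, hq, hs'⟩ := exists_pw_rep φ e₁ e₂ hcomm (ρ.n + 1) j
  let hm' : JHom φ e₁ e₂ ⟨0, j⟩ ⟨ρ.n + 1, j'⟩ :=
    ⟨p, q, Nat.zero_le _, by
      show _ = colimit.ι (X ⋙ Ind.yoneda) j ≫ pw e₁ (ρ.n + 1 - 0)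
      rw [Nat.sub_zero]; exact hp, by
      show _ = colimit.ι (Y ⋙ Ind.yoneda) j ≫ pw e₂ (ρ.n + 1 - 0)
      rw [Nat.sub_zero]; exact hq, hs'⟩
  have hwpp : Ind.yoneda.map (u ≫ p) ≫ colimit.ι (X ⋙ Ind.yoneda) j'
      = colimit.ι (X ⋙ Ind.yoneda) ρ.i ≫ pw e₁ 1 := by
    rw [Functor.map_comp, Category.assoc, hp, ← Category.assoc, hu, Category.assoc,
      pw_idem he₁ _ (by omega), he₁, pw_one]
  have hwqq : Ind.yoneda.map (v ≫ q) ≫ colimit.ι (Y ⋙ Ind.yoneda) j'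
      = colimit.ι (Y ⋙ Ind.yoneda) ρ.i ≫ pw e₂ 1 := by
    rw [Functor.map_comp, Category.assoc, hq, ← Category.assoc, hv, Category.assoc,
      pw_idem he₂ _ (by omega), he₂, pw_one]
  let hm'' : JHom φ e₁ e₂ ρ ⟨ρ.n + 1, j'⟩ :=
    ⟨u ≫ p, v ≫ q, Nat.le_succ _, by
        show _ = colimit.ι (X ⋙ Ind.yoneda) ρ.i ≫ pw e₁ (ρ.n + 1 - ρ.n)
        rw [show ρ.n + 1 - ρ.n = 1 from by omega]; exact hwpp, by
        show _ = colimit.ι (Y ⋙ Ind.yoneda) ρ.i ≫ pw e₂ (ρ.n + 1 - ρ.n)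
        rw [show ρ.n + 1 - ρ.n = 1 from by omega]; exact hwqq, by
        rw [Category.assoc, hs', ← Category.assoc, hs, Category.assoc]⟩
  constructor
  · rw [← Category.assoc, ← hu, Category.assoc, ι_wXmap]
    have w1 := colimit.w (JX φ e₁ e₂ ⋙ Ind.yoneda) hm'
    have w2 := colimit.w (JX φ e₁ e₂ ⋙ Ind.yoneda) hm''
    calc Ind.yoneda.map u ≫ colimit.ι (JX φ e₁ e₂ ⋙ Ind.yoneda) ⟨0, j⟩
        = Ind.yoneda.map u ≫ Ind.yoneda.map p ≫
            colimit.ι (JX φ e₁ e₂ ⋙ Ind.yoneda) ⟨ρ.n + 1, j'⟩ := by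
          rw [show Ind.yoneda.map p ≫ colimit.ι (JX φ e₁ e₂ ⋙ Ind.yoneda) ⟨ρ.n + 1, j'⟩
            = colimit.ι (JX φ e₁ e₂ ⋙ Ind.yoneda) ⟨0, j⟩ from w1]
      _ = Ind.yoneda.map (u ≫ p) ≫ colimit.ι (JX φ e₁ e₂ ⋙ Ind.yoneda) ⟨ρ.n + 1, j'⟩ := by
          rw [Functor.map_comp, Category.assoc]
      _ = colimit.ι (JX φ e₁ e₂ ⋙ Ind.yoneda) ρ := w2
  · rw [← Category.assoc, ← hv, Category.assoc, ι_wYmap]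
    have w1 := colimit.w (JY φ e₁ e₂ ⋙ Ind.yoneda) hm'
    have w2 := colimit.w (JY φ e₁ e₂ ⋙ Ind.yoneda) hm''
    calc Ind.yoneda.map v ≫ colimit.ι (JY φ e₁ e₂ ⋙ Ind.yoneda) ⟨0, j⟩
        = Ind.yoneda.map v ≫ Ind.yoneda.map q ≫
            colimit.ι (JY φ e₁ e₂ ⋙ Ind.yoneda) ⟨ρ.n + 1, j'⟩ := by
          rw [show Ind.yoneda.map q ≫ colimit.ι (JY φ e₁ e₂ ⋙ Ind.yoneda) ⟨ρ.n + 1, j'⟩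
            = colimit.ι (JY φ e₁ e₂ ⋙ Ind.yoneda) ⟨0, j⟩ from w1]
      _ = Ind.yoneda.map (v ≫ q) ≫ colimit.ι (JY φ e₁ e₂ ⋙ Ind.yoneda) ⟨ρ.n + 1, j'⟩ := by
          rw [Functor.map_comp, Category.assoc]
      _ = colimit.ι (JY φ e₁ e₂ ⋙ Ind.yoneda) ρ := w2

lemma retract_arrow_iso (hcomm : e₁ ≫ indMap φ = indMap φ ≫ e₂)
    (he₁ : e₁ ≫ e₁ = e₁) (he₂ : e₂ ≫ e₂ = e₂)
    {f : A ⟶ B} (iA : A ⟶ indOf X) (r : indOf X ⟶ A) (iB : B ⟶ indOf Y) (r' : indOf Y ⟶ B)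
    (hir : iA ≫ r = 𝟙 A) (hir' : iB ≫ r' = 𝟙 B)
    (hc1 : iA ≫ indMap φ = f ≫ iB) (hc2 : r ≫ f = indMap φ ≫ r')
    (hee₁ : e₁ = r ≫ iA) (hee₂ : e₂ = r' ≫ iB) :
    Nonempty (Arrow.mk f ≅ Arrow.mk (indMap (Jφ φ e₁ e₂))) := by
  have hr : e₁ ≫ r = r := by rw [hee₁, Category.assoc, hir, Category.comp_id]
  have hr' : e₂ ≫ r' = r' := by rw [hee₂, Category.assoc, hir', Category.comp_id]
  set α := alphaX φ e₁ e₂ r hr with hα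
  set β := iA ≫ wXmap φ e₁ e₂ with hβ
  set αY := alphaY φ e₁ e₂ r' hr' with hαY
  set βY := iB ≫ wYmap φ e₁ e₂ with hβY
  have hwα : wXmap φ e₁ e₂ ≫ α = r := by
    apply colimit.hom_ext
    intro i
    rw [← Category.assoc, ι_wXmap, hα, ι_alphaX]
  have hwαY : wYmap φ e₁ e₂ ≫ αY = r' := by
    apply colimit.hom_ext
    intro i
    rw [← Category.assoc, ι_wYmap, hαY, ι_alphaY]
  have hβα : β ≫ α = 𝟙 A := by rw [hβ, Category.assoc, hwα, hir]
  have hβαY : βY ≫ αY = 𝟙 B := by rw [hβY, Category.assoc, hwαY, hir']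
  have hαβ : α ≫ β = 𝟙 _ := by
    apply colimit.hom_ext
    intro ρ
    rw [← Category.assoc, hα, ι_alphaX, hβ, Category.comp_id, Category.assoc,
      ← Category.assoc r, ← hee₁]
    exact (e_wXmap φ e₁ e₂ hcomm he₁ he₂ ρ).1
  have hαβY : αY ≫ βY = 𝟙 _ := by
    apply colimit.hom_ext
    intro ρ
    rw [← Category.assoc, hαY, ι_alphaY, hβY, Category.comp_id, Category.assoc,
      ← Category.assoc r', ← hee₂]
    exact (e_wXmap φ e₁ e₂ hcomm he₁ he₂ ρ).2
  have hsq : indMap (Jφ φ e₁ e₂) ≫ αY = α ≫ f := by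
    apply colimit.hom_ext
    intro ρ
    rw [← Category.assoc, ι_indMap (Jφ φ e₁ e₂) ρ, Category.assoc, hαY, ι_alphaY,
      ← Category.assoc]
    have h1 : Ind.yoneda.map ((Jφ φ e₁ e₂).app ρ) ≫ colimit.ι (Y ⋙ Ind.yoneda) ρ.i
        = colimit.ι (X ⋙ Ind.yoneda) ρ.i ≫ indMap φ := (ι_indMap φ ρ.i).symm
    rw [h1, Category.assoc, ← hc2, ← Category.assoc, ← Category.assoc, ι_alphaX]
  haveI : IsIso αY := ⟨βY, hαβY, hβαY⟩
  have hcond : β ≫ indMap (Jφ φ e₁ e₂) = f ≫ βY := by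
    have hL : (β ≫ indMap (Jφ φ e₁ e₂)) ≫ αY = f := by
      rw [Category.assoc, hsq, ← Category.assoc, hβα, Category.id_comp]
    have hR : (f ≫ βY) ≫ αY = f := by rw [Category.assoc, hβαY, Category.comp_id]
    exact (cancel_mono αY).1 (hL.trans hR.symm)
  exact ⟨Arrow.isoMk (Iso.symm ⟨α, β, hαβ, hβα⟩) (Iso.symm ⟨αY, βY, hαβY, hβαY⟩) hcond⟩

end Iso

lemma lw_of_retract (M : MorphismProperty C) (hM : ∀ i : I, M (φ.app i))
    {A B : Ind C} {f : A ⟶ B} (h : IsRetractOf f (indMap φ)) : Lw M f := by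
  obtain ⟨iA, r, iB, r', hir, hir', hc1, hc2⟩ := h
  have hcomm : (r ≫ iA) ≫ indMap φ = indMap φ ≫ (r' ≫ iB) := by
    rw [Category.assoc, hc1, ← Category.assoc, hc2, Category.assoc]
  have he₁ : (r ≫ iA) ≫ (r ≫ iA) = r ≫ iA := by
    have h' : iA ≫ r ≫ iA = iA := by rw [← Category.assoc, hir, Category.id_comp]
    rw [Category.assoc, h']
  have he₂ : (r' ≫ iB) ≫ (r' ≫ iB) = r' ≫ iB := by
    have h' : iB ≫ r' ≫ iB = iB := by rw [← Category.assoc, hir', Category.id_comp]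
    rw [Category.assoc, h']
  haveI := J_filtered φ (r ≫ iA) (r' ≫ iB) hcomm
  obtain ⟨η⟩ := retract_arrow_iso φ (r ≫ iA) (r' ≫ iB) hcomm he₁ he₂ iA r iB r'
    hir hir' hc1 hc2 rfl rfl
  exact ⟨JObj φ (r ≫ iA) (r' ≫ iB), inferInstance, inferInstance,
    JX φ (r ≫ iA) (r' ≫ iB), JY φ (r ≫ iA) (r' ≫ iB), Jφ φ (r ≫ iA) (r' ≫ iB),
    fun ρ => hM ρ.i, ⟨η⟩⟩

end Main

/-- For any class `M` of morphisms of `C`, the class `Lw≅(M)` of essentially levelwise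
`M`-morphisms of `Ind C` is closed under retracts: `R(Lw≅(M)) = Lw≅(M)`. -/
theorem retracts_Lw_eq_Lw (M : MorphismProperty C) :
    retracts (Lw M) = Lw M := by
  refine funext fun A => funext fun B => funext fun f => propext ⟨?_, ?_⟩
  · rintro ⟨P, Q, g, hg, hret⟩
    obtain ⟨I', iS, iF, X, Y, φ, hM, ⟨η⟩⟩ := hg
    exact lw_of_retract φ M hM (isRetractOf_of_iso hret η)
  · intro h
    exact ⟨A, B, f, h, 𝟙 A, 𝟙 A, 𝟙 B, 𝟙 B, by simp, by simp, by simp, by simp⟩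

end Paper
end

section
/- Let C be a category with finite colimits and M ⊆ C a subcategory closed under cobase change (pushout) and containing all isomorphisms. Then every essentially cospecial M-map in Ind(C) is an essentially levelwise M-map: coSp≅(M) ⊆ Lw≅(M). -/
open CategoryTheory Limits

universe v u

namespace Paper

variable {C : Type v} [SmallCategory C]

/-- The inclusion functor of the full subposet `{s // s < t}` of a poset `T`. -/
def ltIncl {T : Type v} [Preorder T] (t : T) : {s : T // s < t} ⥤ T :=
  (Subtype.mono_coe _).functor

/-- The restriction of a diagram `X : T ⥤ C` to the subposet `{s // s < t}`. -/
def ltRestrict {T : Type v} [Preorder T] (X : T ⥤ C) (t : T) : {s : T // s < t} ⥤ C :=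
  ltIncl t ⋙ X

/-- The canonical cocone on the restriction of `X` to `{s // s < t}` with point `X.obj t`. -/
def underCocone {T : Type v} [Preorder T] (X : T ⥤ C) (t : T) : Cocone (ltRestrict X t) where
  pt := X.obj t
  ι :=
    { app := fun s => X.map (homOfLE s.2.le)
      naturality := fun s s' f => by
        dsimp [ltRestrict, ltIncl]
        rw [Category.comp_id]
        exact (X.map_comp _ _).symm }

/-- A natural transformation `φ : X ⟶ Y` of diagrams indexed by a cofinite directed poset `T`
is a cospecial `M`-map if for every `t : T` the canonical map
`X_t ⊔_{colim_{s<t} X_s} colim_{s<t} Y_s ⟶ Y_t` lies in `M`.  This is expressed by means of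
chosen colimit cocones and a pushout square. -/
def IsCospecial {T : Type v} [PartialOrder T] (M : MorphismProperty C) {X Y : T ⥤ C}
    (φ : X ⟶ Y) : Prop :=
  ∀ t : T, ∃ (cX : Cocone (ltRestrict X t)) (hX : IsColimit cX)
    (cY : Cocone (ltRestrict Y t)) (hY : IsColimit cY)
    (P : C) (a : X.obj t ⟶ P) (b : cY.pt ⟶ P) (h : P ⟶ Y.obj t),
      IsPushout (hX.desc (underCocone X t))
        (hX.desc ((Cocone.precompose (Functor.whiskerLeft (ltIncl t) φ)).obj cY)) a b ∧
      a ≫ h = φ.app t ∧ b ≫ h = hY.desc (underCocone Y t) ∧ M h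

/-- The class `coSp≅(M)`: morphisms of `Ind C` isomorphic in the arrow category to a morphism
induced by a cospecial `M`-map of diagrams indexed by a cofinite directed poset. -/
def coSp (M : MorphismProperty C) : MorphismProperty (Ind C) := fun _ _ f =>
  ∃ (T : Type v) (_ : PartialOrder T) (_ : IsFiltered T)
    (_ : ∀ t : T, Finite {s : T // s ≤ t}) (X Y : T ⥤ C) (φ : X ⟶ Y),
      IsCospecial M φ ∧ Nonempty (Arrow.mk f ≅ Arrow.mk (indMap φ))

section Aux

attribute [local instance] Classical.propDecidable

variable {T : Type v} [PartialOrder T]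

/-- Inclusion of the subposet given by a subset. -/
@[reducible] def setIncl (A : Set T) : {s : T // s ∈ A} ⥤ T := (Subtype.mono_coe _).functor

/-- Restriction of a diagram to the subposet given by a subset. -/
@[reducible] def res (X : T ⥤ C) (A : Set T) : {s : T // s ∈ A} ⥤ C := setIncl A ⋙ X

/-- A hom in a subtype poset from an inequality of underlying elements. -/
def subHom {A : Set T} (p q : {s : T // s ∈ A}) (h : p.1 ≤ q.1) : p ⟶ q := homOfLE h

/-- Restricting a cocone along an inclusion of subsets. -/
def resCocone {A B : Set T} (h : A ⊆ B) {X : T ⥤ C} (c : Cocone (res X B)) :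
    Cocone (res X A) where
  pt := c.pt
  ι :=
    { app := fun p => c.ι.app ⟨p.1, h p.2⟩
      naturality := fun p q g =>
        c.ι.naturality (subHom ⟨p.1, h p.2⟩ ⟨q.1, h q.2⟩ (leOfHom g)) }

/-- Restricting a cocone on `A` to the subposet `{s // s < t}` when `{s | s < t} ⊆ A`. -/
def ltResCocone {A : Set T} {t : T} (h : ∀ s, s < t → s ∈ A) {X : T ⥤ C}
    (c : Cocone (res X A)) : Cocone (ltRestrict X t) where
  pt := c.pt
  ι :=
    { app := fun p => c.ι.app ⟨p.1, h p.1 p.2⟩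
      naturality := fun p q g =>
        c.ι.naturality (subHom ⟨p.1, h p.1 p.2⟩ ⟨q.1, h q.1 q.2⟩ (leOfHom g)) }

/-- The cocone on `res X A` induced by a pushout cocone. -/
noncomputable def extCocone (X : T ⥤ C) {A : Set T} {t : T}
    (hmax : ∀ s ∈ A, t ≤ s → t = s)
    (hlt : ∀ s, s < t → s ∈ A \ {t})
    {cL : Cocone (ltRestrict X t)}
    {cA' : Cocone (res X (A \ {t}))}
    {dX : cL.pt ⟶ X.obj t} {jX : cL.pt ⟶ cA'.pt}
    (f1 : ∀ p : {s : T // s < t}, cL.ι.app p ≫ dX = X.map (homOfLE (le_of_lt p.2)))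
    (f2 : ∀ p : {s : T // s < t}, cL.ι.app p ≫ jX = cA'.ι.app ⟨p.1, hlt p.1 p.2⟩)
    (s : PushoutCocone dX jX) : Cocone (res X A) where
  pt := s.pt
  ι :=
    { app := fun p =>
        if hp : p.1 = t then X.map (homOfLE (le_of_eq hp)) ≫ s.inl
        else cA'.ι.app ⟨p.1, p.2, hp⟩ ≫ s.inr
      naturality := by
        rintro ⟨p, hp⟩ ⟨q, hq⟩ g
        have hpq : p ≤ q := leOfHom g
        dsimp only
        by_cases hq' : q = t
        · rw [dif_pos hq']
          by_cases hp' : p = t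
          · rw [dif_pos hp']
            show X.map (homOfLE hpq) ≫ X.map (homOfLE (le_of_eq hq')) ≫ s.inl =
              (X.map (homOfLE (le_of_eq hp')) ≫ s.inl) ≫ 𝟙 s.pt
            rw [Category.comp_id, ← Category.assoc, ← X.map_comp]
            rfl
          · have hplt : p < t := lt_of_le_of_ne (hpq.trans (le_of_eq hq')) hp'
            rw [dif_neg hp']
            show X.map (homOfLE hpq) ≫ X.map (homOfLE (le_of_eq hq')) ≫ s.inl =
              (cA'.ι.app ⟨p, ⟨hp, hp'⟩⟩ ≫ s.inr) ≫ 𝟙 s.pt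
            erw [Category.comp_id, ← Category.assoc, ← X.map_comp,
              show (homOfLE hpq ≫ homOfLE (le_of_eq hq') : (p : T) ⟶ t) =
                homOfLE (le_of_lt hplt) from rfl,
              ← f1 ⟨p, hplt⟩, Category.assoc, s.condition, ← Category.assoc, f2 ⟨p, hplt⟩]
            rfl
        · have hp' : p ≠ t := fun hpt => hq' (hmax q hq (hpt.symm.le.trans hpq)).symm
          rw [dif_neg hq', dif_neg hp']
          have hnat : X.map (homOfLE hpq) ≫ cA'.ι.app ⟨q, ⟨hq, hq'⟩⟩ =
              cA'.ι.app ⟨p, ⟨hp, hp'⟩⟩ :=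
            cA'.w (subHom (A := A \ {t}) ⟨p, ⟨hp, hp'⟩⟩ ⟨q, ⟨hq, hq'⟩⟩ hpq)
          show X.map (homOfLE hpq) ≫ cA'.ι.app ⟨q, ⟨hq, hq'⟩⟩ ≫ s.inr =
            (cA'.ι.app ⟨p, ⟨hp, hp'⟩⟩ ≫ s.inr) ≫ 𝟙 s.pt
          erw [Category.comp_id, ← Category.assoc, hnat]
          rfl }

lemma extCocone_ι_app (X : T ⥤ C) {A : Set T} {t : T}
    (hmax : ∀ s ∈ A, t ≤ s → t = s)
    (hlt : ∀ s, s < t → s ∈ A \ {t})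
    {cL : Cocone (ltRestrict X t)}
    {cA' : Cocone (res X (A \ {t}))}
    {dX : cL.pt ⟶ X.obj t} {jX : cL.pt ⟶ cA'.pt}
    (f1 : ∀ p : {s : T // s < t}, cL.ι.app p ≫ dX = X.map (homOfLE (le_of_lt p.2)))
    (f2 : ∀ p : {s : T // s < t}, cL.ι.app p ≫ jX = cA'.ι.app ⟨p.1, hlt p.1 p.2⟩)
    (s : PushoutCocone dX jX) (p : {s : T // s ∈ A}) :
    (extCocone X hmax hlt f1 f2 s).ι.app p =
      if hp : p.1 = t then X.map (homOfLE (le_of_eq hp)) ≫ s.inl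
      else cA'.ι.app ⟨p.1, p.2, hp⟩ ≫ s.inr := rfl

/-- The colimit of a restriction to a lower set `A` with a maximal element `t` is the pushout
of the colimit over `A \ {t}` and `X t` along the colimit over `{s | s < t}`. -/
lemma res_isPushout (X : T ⥤ C) {A : Set T} {t : T} (ht : t ∈ A)
    (hmax : ∀ s ∈ A, t ≤ s → t = s)
    (hlt : ∀ s, s < t → s ∈ A \ {t})
    {cL : Cocone (ltRestrict X t)} (hL : IsColimit cL)
    {cA' : Cocone (res X (A \ {t}))} (hA' : IsColimit cA')
    {cA : Cocone (res X A)} (hA : IsColimit cA)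
    {dX : cL.pt ⟶ X.obj t} {jX : cL.pt ⟶ cA'.pt} {r : cA'.pt ⟶ cA.pt}
    (f1 : ∀ p : {s : T // s < t}, cL.ι.app p ≫ dX = X.map (homOfLE (le_of_lt p.2)))
    (f2 : ∀ p : {s : T // s < t}, cL.ι.app p ≫ jX = cA'.ι.app ⟨p.1, hlt p.1 p.2⟩)
    (f3 : ∀ p : {s : T // s ∈ A \ {t}}, cA'.ι.app p ≫ r = cA.ι.app ⟨p.1, p.2.1⟩) :
    IsPushout dX jX (cA.ι.app ⟨t, ht⟩) r := by
  have w : dX ≫ cA.ι.app ⟨t, ht⟩ = jX ≫ r := by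
    apply hL.hom_ext
    intro p
    erw [← Category.assoc, f1, ← Category.assoc, f2, f3]
    exact (cA.ι.naturality
      (subHom ⟨p.1, (hlt p.1 p.2).1⟩ ⟨t, ht⟩ (le_of_lt p.2))).trans (Category.comp_id _)
  refine IsPushout.of_isColimit' ⟨w⟩ (PushoutCocone.IsColimit.mk _
    (fun s => hA.desc (extCocone X hmax hlt f1 f2 s)) ?_ ?_ ?_)
  · intro s
    erw [hA.fac (extCocone X hmax hlt f1 f2 s) ⟨t, ht⟩,
      extCocone_ι_app X hmax hlt f1 f2 s ⟨t, ht⟩, dif_pos rfl]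
    show X.map (homOfLE (le_refl t)) ≫ s.inl = s.inl
    rw [show (homOfLE (le_refl t) : t ⟶ t) = 𝟙 t from rfl, X.map_id, Category.id_comp]
  · intro s
    apply hA'.hom_ext
    intro p
    erw [← Category.assoc, f3, hA.fac (extCocone X hmax hlt f1 f2 s) ⟨p.1, p.2.1⟩,
      extCocone_ι_app X hmax hlt f1 f2 s ⟨p.1, p.2.1⟩,
      dif_neg (show ¬((p.1 : T) = t) from fun hmem => p.2.2 hmem)]
    rfl
  · intro s m h1 h2
    apply hA.hom_ext
    rintro ⟨q, hq⟩
    erw [hA.fac (extCocone X hmax hlt f1 f2 s) ⟨q, hq⟩,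
      extCocone_ι_app X hmax hlt f1 f2 s ⟨q, hq⟩]
    by_cases hq' : q = t
    · erw [dif_pos hq', ← h1, ← Category.assoc,
        show X.map (homOfLE (le_of_eq hq')) ≫ cA.ι.app ⟨t, ht⟩ = cA.ι.app ⟨q, hq⟩ from
          cA.w (subHom (A := A) ⟨q, hq⟩ ⟨t, ht⟩ (le_of_eq hq'))]
      rfl
    · erw [dif_neg hq', ← f3 ⟨q, ⟨hq, hq'⟩⟩, Category.assoc, h2]
      rfl

end Aux

section Main

variable {T : Type v} [PartialOrder T]

/-- The comparison map between colimits over the empty subset is an isomorphism. -/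
lemma key_isIso {X Y : T ⥤ C} (φ : X ⟶ Y)
    (cA : Cocone (res X (∅ : Set T))) (hA : IsColimit cA)
    (cB : Cocone (res Y (∅ : Set T))) (hB : IsColimit cB) :
    IsIso (hA.desc ((Cocone.precompose (Functor.whiskerLeft (setIncl (∅ : Set T)) φ)).obj cB)) := by
  haveI : IsEmpty {s : T // s ∈ (∅ : Set T)} := ⟨fun p => p.2⟩
  exact ⟨hB.desc ⟨cA.pt,
      { app := fun p => isEmptyElim p, naturality := fun p => isEmptyElim p }⟩,
    hA.hom_ext (fun p => isEmptyElim p), hB.hom_ext (fun p => isEmptyElim p)⟩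

/-- The inductive step: if the comparison map over `A \ {t}` is in `M` and the cospecial
condition holds at the maximal element `t` of `A`, then the comparison map over `A` is in `M`. -/
lemma step (M : MorphismProperty C) [HasFiniteColimits C] [M.IsMultiplicative]
    [M.IsStableUnderCobaseChange] {X Y : T ⥤ C} (φ : X ⟶ Y)
    {A : Set T} {t : T} (ht : t ∈ A)
    (hmax : ∀ s ∈ A, t ≤ s → t = s)
    (hlt : ∀ s, s < t → s ∈ A \ {t})
    {cL : Cocone (ltRestrict X t)} (hL : IsColimit cL)
    {cA' : Cocone (res X (A \ {t}))} (hA' : IsColimit cA')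
    {cA : Cocone (res X A)} (hA : IsColimit cA)
    {cLY : Cocone (ltRestrict Y t)} (hLY : IsColimit cLY)
    {cB' : Cocone (res Y (A \ {t}))} (hB' : IsColimit cB')
    {cB : Cocone (res Y A)} (hB : IsColimit cB)
    {P : C} {a : X.obj t ⟶ P} {b : cLY.pt ⟶ P} {h : P ⟶ Y.obj t}
    (S1 : IsPushout (hL.desc (underCocone X t))
      (hL.desc ((Cocone.precompose (Functor.whiskerLeft (ltIncl t) φ)).obj cLY)) a b)
    (hah : a ≫ h = φ.app t)
    (hbh : b ≫ h = hLY.desc (underCocone Y t))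
    (hMh : M h)
    (hgA' : M (hA'.desc ((Cocone.precompose (Functor.whiskerLeft (setIncl (A \ {t})) φ)).obj cB'))) :
    M (hA.desc ((Cocone.precompose (Functor.whiskerLeft (setIncl A) φ)).obj cB)) := by
  set dX := hL.desc (underCocone X t) with hdX
  set lφ := hL.desc ((Cocone.precompose (Functor.whiskerLeft (ltIncl t) φ)).obj cLY) with hlφdef
  set dY := hLY.desc (underCocone Y t) with hdY
  set gA := hA.desc ((Cocone.precompose (Functor.whiskerLeft (setIncl A) φ)).obj cB) with hgAdef
  have fdX : ∀ p : {s : T // s < t}, cL.ι.app p ≫ dX = X.map (homOfLE (le_of_lt p.2)) :=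
    fun p => by rw [hdX]; exact hL.fac _ p
  have fdY : ∀ p : {s : T // s < t}, cLY.ι.app p ≫ dY = Y.map (homOfLE (le_of_lt p.2)) :=
    fun p => by rw [hdY]; exact hLY.fac _ p
  have flφ : ∀ p : {s : T // s < t}, cL.ι.app p ≫ lφ = φ.app p.1 ≫ cLY.ι.app p :=
    fun p => by rw [hlφdef]; exact hL.fac _ p
  have fgA : ∀ p : {s : T // s ∈ A}, cA.ι.app p ≫ gA = φ.app p.1 ≫ cB.ι.app p :=
    fun p => by rw [hgAdef]; exact hA.fac _ p
  obtain ⟨jX, fjX⟩ : ∃ j, ∀ p : {s : T // s < t},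
      cL.ι.app p ≫ j = cA'.ι.app ⟨p.1, hlt p.1 p.2⟩ :=
    ⟨hL.desc (ltResCocone (fun s hs => hlt s hs) cA'), fun p => hL.fac _ p⟩
  obtain ⟨jY, fjY⟩ : ∃ j, ∀ p : {s : T // s < t},
      cLY.ι.app p ≫ j = cB'.ι.app ⟨p.1, hlt p.1 p.2⟩ :=
    ⟨hLY.desc (ltResCocone (fun s hs => hlt s hs) cB'), fun p => hLY.fac _ p⟩
  obtain ⟨r, fr⟩ : ∃ r, ∀ p : {s : T // s ∈ A \ {t}},
      cA'.ι.app p ≫ r = cA.ι.app ⟨p.1, p.2.1⟩ :=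
    ⟨hA'.desc (resCocone Set.diff_subset cA), fun p => hA'.fac _ p⟩
  obtain ⟨r', fr'⟩ : ∃ r, ∀ p : {s : T // s ∈ A \ {t}},
      cB'.ι.app p ≫ r = cB.ι.app ⟨p.1, p.2.1⟩ :=
    ⟨hB'.desc (resCocone Set.diff_subset cB), fun p => hB'.fac _ p⟩
  obtain ⟨gA', hMgA', fgA'⟩ : ∃ g, M g ∧ ∀ p : {s : T // s ∈ A \ {t}},
      cA'.ι.app p ≫ g = φ.app p.1 ≫ cB'.ι.app p :=
    ⟨_, hgA', fun p => hA'.fac _ p⟩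
  have S2 : IsPushout dX jX (cA.ι.app ⟨t, ht⟩) r :=
    res_isPushout X ht hmax hlt hL hA' hA fdX fjX fr
  have S3 : IsPushout dY jY (cB.ι.app ⟨t, ht⟩) r' :=
    res_isPushout Y ht hmax hlt hLY hB' hB fdY fjY fr'
  have c1 : jX ≫ gA' = lφ ≫ jY := by
    apply hL.hom_ext; intro p
    erw [← Category.assoc, fjX, fgA', ← Category.assoc, flφ, Category.assoc, fjY]
    rfl
  have c2 : r ≫ gA = gA' ≫ r' := by
    apply hA'.hom_ext; intro p
    erw [← Category.assoc, fr, fgA, ← Category.assoc, fgA', Category.assoc, fr']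
    rfl
  have S4 : IsPushout gA' r (pushout.inl gA' r) (pushout.inr gA' r) :=
    IsPushout.of_hasPushout _ _
  have hq1 : M (pushout.inr gA' r) := MorphismProperty.of_isPushout S4.flip hMgA'
  have wcomp : dX ≫ cA.ι.app ⟨t, ht⟩ ≫ pushout.inr gA' r = lφ ≫ jY ≫ pushout.inl gA' r := by
    erw [← Category.assoc, S2.w, Category.assoc, ← S4.w, ← Category.assoc, c1, Category.assoc]
    rfl
  obtain ⟨wP, fa, fb⟩ : ∃ wP, a ≫ wP = cA.ι.app ⟨t, ht⟩ ≫ pushout.inr gA' r ∧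
      b ≫ wP = jY ≫ pushout.inl gA' r :=
    ⟨S1.desc _ _ wcomp, S1.inl_desc _ _ _, S1.inr_desc _ _ _⟩
  obtain ⟨k, fu, fq1⟩ : ∃ k, pushout.inl gA' r ≫ k = r' ∧ pushout.inr gA' r ≫ k = gA :=
    ⟨S4.desc _ _ c2.symm, S4.inl_desc _ _ _, S4.inr_desc _ _ _⟩
  have Comp1 : IsPushout dX (jX ≫ gA') (cA.ι.app ⟨t, ht⟩ ≫ pushout.inr gA' r)
      (pushout.inl gA' r) := S2.paste_vert S4.flip
  erw [c1, ← fa] at Comp1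
  have U : IsPushout b jY wP (pushout.inl gA' r) := IsPushout.of_top Comp1 fb S1
  have hcomm : h ≫ cB.ι.app ⟨t, ht⟩ = wP ≫ k := by
    apply S1.hom_ext
    · erw [← Category.assoc, hah, ← Category.assoc, fa, Category.assoc, fq1, fgA ⟨t, ht⟩]
      rfl
    · erw [← Category.assoc, hbh, S3.w, ← Category.assoc, fb, Category.assoc, fu]
  have Gsq : IsPushout h wP (cB.ι.app ⟨t, ht⟩) k := by
    refine IsPushout.of_left ?_ hcomm U
    erw [hbh, fu]
    exact S3
  have hk : M k := MorphismProperty.of_isPushout Gsq.flip hMh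
  rw [← fq1]
  exact M.comp_mem _ _ hq1 hk

/-- Every comparison map of colimits over a finite lower subset along a cospecial map is in `M`. -/
lemma key (M : MorphismProperty C) [HasFiniteColimits C] [M.IsMultiplicative]
    [M.IsStableUnderCobaseChange] (hiso : MorphismProperty.isomorphisms C ≤ M)
    {X Y : T ⥤ C} (φ : X ⟶ Y) (hφ : IsCospecial M φ) :
    ∀ (n : ℕ) (A : Set T) (_ : A.Finite), A.ncard ≤ n → IsLowerSet A →
      ∀ (cA : Cocone (res X A)) (hA : IsColimit cA)
        (cB : Cocone (res Y A)) (hB : IsColimit cB),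
        M (hA.desc ((Cocone.precompose (Functor.whiskerLeft (setIncl A) φ)).obj cB)) := by
  intro n
  induction n with
  | zero =>
    intro A hfin hcard _ cA hA cB hB
    have hA0 : A = ∅ := by
      rw [← Set.ncard_eq_zero hfin]; omega
    subst hA0
    exact hiso _ (key_isIso φ cA hA cB hB)
  | succ n ih =>
    intro A hfin hcard hlow cA hA cB hB
    rcases Set.eq_empty_or_nonempty A with hA0 | hne
    · subst hA0
      exact hiso _ (key_isIso φ cA hA cB hB)
    · obtain ⟨t, ht, hmax⟩ := Set.Finite.exists_maximalFor id A hfin hne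
      have hlt : ∀ s, s < t → s ∈ A \ {t} := fun s hs =>
        ⟨hlow hs.le ht, fun hmem => (ne_of_lt hs) hmem⟩
      have hfin' : (A \ {t}).Finite := hfin.diff
      have hcard' : (A \ {t}).ncard ≤ n := by
        have := Set.ncard_diff_singleton_lt_of_mem ht hfin
        omega
      have hlow' : IsLowerSet (A \ {t}) := by
        intro x y hyx hx
        refine ⟨hlow hyx hx.1, fun hmem => hx.2 ?_⟩
        have h1 : t ≤ x := (le_of_eq (Eq.symm hmem)).trans hyx
        exact (le_antisymm h1 (hmax hx.1 h1)).symm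
      haveI : FinCategory {s : T // s ∈ A \ {t}} :=
        { fintypeObj := hfin'.fintype
          fintypeHom := fun _ _ => Fintype.ofFinite _ }
      haveI : HasColimitsOfShape {s : T // s ∈ A \ {t}} C :=
        inferInstance
      obtain ⟨cL, hL, cLY, hLY, P, a, b, h, S1, hah, hbh, hMh⟩ := hφ t
      have hgA' : M ((colimit.isColimit (res X (A \ {t}))).desc
          ((Cocone.precompose (Functor.whiskerLeft (setIncl (A \ {t})) φ)).obj
            (colimit.cocone (res Y (A \ {t}))))) :=
        ih (A \ {t}) hfin' hcard' hlow' _ (colimit.isColimit _) _ (colimit.isColimit _)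
      exact step M φ ht (fun s hs hts => le_antisymm hts (hmax hs hts)) hlt hL (colimit.isColimit _) hA
        hLY (colimit.isColimit _) hB S1 hah hbh hMh hgA'

end Main

/-- Let `C` be a category with finite colimits and `M` a subcategory of `C` (a multiplicative
class of morphisms) closed under cobase change and containing all isomorphisms.  Then every
essentially cospecial `M`-map in `Ind C` is an essentially levelwise `M`-map:
`coSp≅(M) ⊆ Lw≅(M)`. -/
theorem coSp_le_Lw [HasFiniteColimits C] (M : MorphismProperty C)
    [M.IsMultiplicative] [M.IsStableUnderCobaseChange]
    (hiso : MorphismProperty.isomorphisms C ≤ M) :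
    coSp M ≤ Lw M := by
  rintro Z W f ⟨T, instT, instF, hcof, X, Y, φ, hsp, hiso2⟩
  refine ⟨T, inferInstance, instF, X, Y, φ, fun t => ?_, hiso2⟩
  obtain ⟨cL, hL, cLY, hLY, P, a, b, h, S1, hah, hbh, hMh⟩ := hsp t
  have hfinle : ({s : T | s ≤ t}).Finite := @Set.toFinite _ _ (hcof t)
  have hfinlt : ({s : T | s < t}).Finite := hfinle.subset (fun s hs => le_of_lt hs)
  have hlow : IsLowerSet {s : T | s < t} := fun x y hyx hx => lt_of_le_of_lt hyx hx
  have hlφ : M (hL.desc ((Cocone.precompose (Functor.whiskerLeft (ltIncl t) φ)).obj cLY)) :=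
    key M hiso φ hsp ({s : T | s < t}).ncard {s : T | s < t} hfinlt le_rfl hlow cL hL cLY hLY
  have hMa : M a := MorphismProperty.of_isPushout S1 hlφ
  rw [← hah]
  exact M.comp_mem _ _ hMa hMh

end Paper
end

section
/- For a category B with finite colimits, the functor category of presheaves on B that send finite colimits in B to finite limits in Set is equivalent to Ind(B), via the extension of the Yoneda embedding that commutes with filtered colimits. -/
open CategoryTheory Limits

universe v u

namespace Paper

lemma isIndObject_eq_preserves (B : Type v) [SmallCategory B] [HasFiniteColimits B] :
    (fun P : Bᵒᵖ ⥤ Type v => Nonempty (PreservesFiniteLimits P)) = IsIndObject := by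
  funext P
  apply propext
  rw [isIndObject_iff, ← isFiltered_costructuredArrow_yoneda_iff_nonempty_preservesFiniteLimits]
  have : Small.{v} (CostructuredArrow yoneda P) :=
    small_of_injective (f := fun X => (⟨X.left, X.hom⟩ : Σ b : B, yoneda.obj b ⟶ P))
      (by rintro ⟨a,⟨⟨⟩⟩,f⟩ ⟨b,⟨⟨⟩⟩,g⟩ h; simp at h; obtain ⟨rfl, h⟩ := h; cases h; rfl)
  have : EssentiallySmall.{v} (CostructuredArrow yoneda P) :=
    essentiallySmall_of_small_of_locallySmall _
  exact ⟨fun h => ⟨h.some, finallySmall_of_essentiallySmall _⟩, fun h => ⟨h.1⟩⟩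

/-- For a small category `B` with finite colimits, the category of ind-objects of `B` is
equivalent to the full subcategory of presheaves on `B` which send finite colimits in `B` to
finite limits in `Set` (i.e. which preserve finite limits as functors `Bᵒᵖ ⥤ Type`), via the
extension of the Yoneda embedding along filtered colimits (which is the canonical inclusion
`Ind B ⥤ Bᵒᵖ ⥤ Type`). -/
theorem ind_equiv_finiteColimitPreservingPresheaves (B : Type v) [SmallCategory B]
    [HasFiniteColimits B] :
    (∀ X : Ind B, Nonempty (PreservesFiniteLimits ((Ind.inclusion B).obj X))) ∧
    ∃ e : Ind B ≌ ObjectProperty.FullSubcategory (fun P : Bᵒᵖ ⥤ Type v => Nonempty (PreservesFiniteLimits P)),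
      Nonempty (e.functor ⋙ ObjectProperty.ι _ ≅ Ind.inclusion B) := by
  constructor
  · intro X
    have := (X.isIndObject_inclusion_obj).isFiltered
    exact ⟨preservesFiniteLimits_of_isFiltered_costructuredArrow_yoneda _⟩
  · rw [isIndObject_eq_preserves]
    exact ⟨Ind.equivalence B, ⟨Iso.refl _⟩⟩

end Paper
end
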